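/- Let P(y,z) be a polynomial over a field F of characteristic 0 with individual degree at most r in each variable. Then for every Boolean point a in {0,1}^{n_y} with at most k nonzero coordinates, the partial evaluation P(a, z) lies in the F[z]-span of the set of polynomials obtained by taking partial derivatives of P of total order at most rk with respect to y-variables and then setting all y-variables to 0. -/

import Mathlib

open MvPolynomial

private lemma coeff_pderiv' {σ R : Type*} [CommSemiring R] [DecidableEq σ] (i : σ)
    (m : σ →₀ ℕ) (P : MvPolynomial σ R) :
    coeff m (pderiv i P) = (m i + 1) * coeff (m + Finsupp.single i 1) P := by
  induction P using MvPolynomial.induction_on' with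
  | add p q hp hq => simp [hp, hq, mul_add]
  | monomial s a =>
    rw [pderiv_monomial, coeff_monomial, coeff_monomial]
    by_cases h : s = m + Finsupp.single i 1
    · subst h
      rw [if_pos rfl, if_pos (add_tsub_cancel_right m (Finsupp.single i 1))]
      simp [mul_comm]
    · rw [if_neg h]
      by_cases h2 : s - Finsupp.single i 1 = m
      · have hsi : s i = 0 := by
          by_contra hsi
          apply h
          have hle : Finsupp.single i 1 ≤ s := by
            rw [Finsupp.single_le_iff]
            omega
          rw [← h2, tsub_add_cancel_of_le hle]
        rw [if_pos h2, hsi]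
        simp
      · rw [if_neg h2, mul_zero]

private noncomputable def Nfac {n : ℕ} (m : Fin n →₀ ℕ) : ℕ := ∏ i, (m i).factorial

private lemma Nfac_add_single {n : ℕ} (m : Fin n →₀ ℕ) (i : Fin n) :
    Nfac (m + Finsupp.single i 1) = (m i + 1) * Nfac m := by
  unfold Nfac
  rw [← Finset.mul_prod_erase Finset.univ _ (Finset.mem_univ i),
    ← Finset.mul_prod_erase Finset.univ (fun j => (m j).factorial) (Finset.mem_univ i)]
  have h1 : ∀ j ∈ Finset.univ.erase i,
      ((m + Finsupp.single i 1 : Fin n →₀ ℕ) j).factorial = (m j).factorial := by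
    intro j hj
    have : j ≠ i := (Finset.mem_erase.mp hj).1
    rw [Finsupp.add_apply, Finsupp.single_apply, if_neg (Ne.symm this), add_zero]
  rw [Finset.prod_congr rfl h1]
  have h2 : ((m + Finsupp.single i 1 : Fin n →₀ ℕ) i).factorial = (m i + 1) * (m i).factorial := by
    rw [Finsupp.add_apply, Finsupp.single_eq_same, Nat.factorial_succ]
  rw [h2, mul_assoc]

private lemma key {R : Type*} [CommSemiring R] {n : ℕ} (l : List (Fin n))
    (P : MvPolynomial (Fin n) R) (m : Fin n →₀ ℕ) :
    coeff m (l.foldr (fun i q => pderiv i q) P) * (Nfac m : R) =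
      (Nfac (m + Multiset.toFinsupp (l : Multiset (Fin n))) : R) *
        coeff (m + Multiset.toFinsupp (l : Multiset (Fin n))) P := by
  induction l generalizing m with
  | nil => simp [mul_comm]
  | cons i l ih =>
    have hms : Multiset.toFinsupp ((i :: l : List (Fin n)) : Multiset (Fin n)) =
        Multiset.toFinsupp (l : Multiset (Fin n)) + Finsupp.single i 1 := by
      rw [← Multiset.cons_coe, ← Multiset.singleton_add, Multiset.toFinsupp_add,
        Multiset.toFinsupp_singleton, add_comm]
    rw [List.foldr_cons, coeff_pderiv', hms]
    have := ih (m + Finsupp.single i 1)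
    calc (↑(m i) + 1) * coeff (m + Finsupp.single i 1)
          (l.foldr (fun i q => pderiv i q) P) * (Nfac m : R)
        = coeff (m + Finsupp.single i 1) (l.foldr (fun i q => pderiv i q) P) *
            (Nfac (m + Finsupp.single i 1) : R) := by
          rw [Nfac_add_single]; push_cast; ring
      _ = (Nfac (m + Finsupp.single i 1 + Multiset.toFinsupp (l : Multiset (Fin n))) : R) *
            coeff (m + Finsupp.single i 1 + Multiset.toFinsupp (l : Multiset (Fin n))) P := this
      _ = _ := by rw [show m + Finsupp.single i 1 + Multiset.toFinsupp (l : Multiset (Fin n))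
            = m + (Multiset.toFinsupp (l : Multiset (Fin n)) + Finsupp.single i 1) by abel]

theorem stmt7 {F : Type*} [Field F] [CharZero F] (ny nz r k : ℕ)
    (P : MvPolynomial (Fin ny) (MvPolynomial (Fin nz) F))
    (hdeg : ∀ i, P.degreeOf i ≤ r)
    (a : Fin ny → MvPolynomial (Fin nz) F)
    (ha01 : ∀ i, a i = 0 ∨ a i = 1)
    (hak : ∃ S : Finset (Fin ny), S.card ≤ k ∧ ∀ i ∉ S, a i = 0) :
    eval a P ∈ Submodule.span (MvPolynomial (Fin nz) F)
      { Q | ∃ l : List (Fin ny), l.length ≤ r * k ∧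
        Q = eval (0 : Fin ny → MvPolynomial (Fin nz) F)
          (l.foldr (fun i q => pderiv i q) P) } := by
  obtain ⟨S, hScard, hS⟩ := hak
  rw [eval_eq]
  apply Submodule.sum_mem
  intro d hd
  by_cases hall : ∀ i ∈ d.support, a i = 1
  · -- product is 1
    have hprod : (∏ i ∈ d.support, a i ^ d i) = 1 := by
      apply Finset.prod_eq_one
      intro i hi
      rw [hall i hi, one_pow]
    rw [hprod, mul_one]
    -- choose the list
    set l : List (Fin ny) := (Finsupp.toMultiset d).toList with hl
    have hlm : (l : Multiset (Fin ny)) = Finsupp.toMultiset d := Multiset.coe_toList _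
    have hlf : Multiset.toFinsupp (l : Multiset (Fin ny)) = d := by
      rw [hlm, Finsupp.toMultiset_toFinsupp]
    -- support of d ⊆ S
    have hsupp : d.support ⊆ S := by
      intro i hi
      by_contra hiS
      have := hS i hiS
      rw [hall i hi] at this
      exact one_ne_zero this
    -- each d i ≤ r
    have hdi : ∀ i, d i ≤ r := by
      intro i
      refine le_trans ?_ (hdeg i)
      rw [degreeOf_eq_sup]
      exact Finset.le_sup (f := fun m => m i) hd
    have hlen : l.length ≤ r * k := by
      have : l.length = d.sum fun _ => id := by
        rw [← Finsupp.card_toMultiset, ← hlm, Multiset.coe_card]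
      rw [this]
      have : (d.sum fun _ => id) ≤ r * d.support.card := by
        rw [Finsupp.sum]
        calc (∑ i ∈ d.support, d i) ≤ ∑ _i ∈ d.support, r :=
              Finset.sum_le_sum (fun i _ => hdi i)
          _ = d.support.card * r := by rw [Finset.sum_const, smul_eq_mul]
          _ = r * d.support.card := mul_comm _ _
      refine le_trans this ?_
      exact Nat.mul_le_mul_left r (le_trans (Finset.card_le_card hsupp) hScard)
    have hmem : eval (0 : Fin ny → MvPolynomial (Fin nz) F)
        (l.foldr (fun i q => pderiv i q) P) ∈ Submodule.span (MvPolynomial (Fin nz) F)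
        { Q | ∃ l : List (Fin ny), l.length ≤ r * k ∧
          Q = eval (0 : Fin ny → MvPolynomial (Fin nz) F)
            (l.foldr (fun i q => pderiv i q) P) } :=
      Submodule.subset_span ⟨l, hlen, rfl⟩
    have hkey := key l P 0
    rw [hlf, Nfac, Finsupp.coe_zero] at hkey
    simp only [Pi.zero_apply, Nat.factorial_zero, Finset.prod_const_one, Nat.cast_one,
      mul_one, zero_add] at hkey
    -- hkey : coeff 0 (foldr pderiv l P) = Nfac d * coeff d P
    have heval : eval (0 : Fin ny → MvPolynomial (Fin nz) F)
        (l.foldr (fun i q => pderiv i q) P) = (Nfac d : MvPolynomial (Fin nz) F) * coeff d P := by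
      rw [eval_zero, constantCoeff_eq]
      exact hkey
    have hNne : ((Nfac d : F))⁻¹ * (Nfac d : F) = 1 := by
      refine inv_mul_cancel₀ (Nat.cast_ne_zero.mpr ?_)
      unfold Nfac
      exact Finset.prod_ne_zero_iff.mpr fun i _ => (Nat.factorial_pos _).ne'
    have : coeff d P = (C ((Nfac d : F))⁻¹ : MvPolynomial (Fin nz) F) •
        eval (0 : Fin ny → MvPolynomial (Fin nz) F) (l.foldr (fun i q => pderiv i q) P) := by
      rw [heval, smul_eq_mul, ← mul_assoc]
      rw [show ((Nfac d : ℕ) : MvPolynomial (Fin nz) F) = C ((Nfac d : ℕ) : F) from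
        (map_natCast (C : F →+* MvPolynomial (Fin nz) F) (Nfac d)).symm]
      rw [← C_mul, hNne, C_1, one_mul]
    rw [this]
    exact Submodule.smul_mem _ _ hmem
  · -- some factor is 0
    push_neg at hall
    obtain ⟨i, hi, hai⟩ := hall
    have hai0 : a i = 0 := (ha01 i).resolve_right hai
    have : (∏ i ∈ d.support, a i ^ d i) = 0 := by
      apply Finset.prod_eq_zero hi
      rw [hai0, zero_pow]
      exact Finsupp.mem_support_iff.mp hi
    rw [this, mul_zero]
    exact Submodule.zero_mem _
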